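/- Let (X, d_X) and (Y, d_Y) be metric spaces and let F : X → Set X and G : Y → Set Y be set-valued maps (with nonempty values). If F and G both have the periodic shadowing property, then the product map F × G : X × Y → Set (X × Y), defined by (F × G)(x,y) = F(x) × G(y), has the periodic shadowing property with respect to the metric d̂((x₁,y₁),(x₂,y₂)) = max{d_X(x₁,x₂), d_Y(y₁,y₂)} on X × Y. -/

import Mathlib

/-- An orbit of a set-valued map `F`: a sequence with `z (n+1) ∈ F (z n)` for all `n`. -/
def IsOrbit {X : Type*} (F : X → Set X) (z : ℕ → X) : Prop :=
  ∀ n, z (n + 1) ∈ F (z n)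

/-- A `δ`-pseudo-orbit of a set-valued map `F`. -/
def IsPseudoOrbit {X : Type*} [MetricSpace X] (F : X → Set X) (δ : ℝ) (x : ℕ → X) : Prop :=
  ∀ n, Metric.infDist (x (n + 1)) (F (x n)) < δ

/-- A periodic sequence: there is `k ≥ 1` with `x (n + k) = x n` for all `n`. -/
def IsPeriodicSeq {X : Type*} (x : ℕ → X) : Prop :=
  ∃ k : ℕ, 1 ≤ k ∧ ∀ n, x (n + k) = x n

/-- The periodic shadowing property for a set-valued map. -/
def SVPeriodicShadowing {X : Type*} [MetricSpace X] (F : X → Set X) : Prop :=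
  ∀ ε > (0 : ℝ), ∃ δ > (0 : ℝ), ∀ x : ℕ → X, IsPseudoOrbit F δ x → IsPeriodicSeq x →
    ∃ z : ℕ → X, IsOrbit F z ∧ IsPeriodicSeq z ∧ ∀ n, dist (z n) (x n) < ε

lemma period_mul {X : Type*} (x : ℕ → X) (k : ℕ) (h : ∀ n, x (n + k) = x n) :
    ∀ m n, x (n + m * k) = x n := by
  intro m
  induction m with
  | zero => simp
  | succ m ih =>
    intro n
    have : n + (m + 1) * k = (n + m * k) + k := by ring
    rw [this, h, ih]

lemma infDist_fst_le {X Y : Type*} [MetricSpace X] [MetricSpace Y]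
    (p : X × Y) (S : Set X) (T : Set Y) (hT : T.Nonempty) :
    Metric.infDist p.1 S ≤ Metric.infDist p (S ×ˢ T) := by
  rcases S.eq_empty_or_nonempty with rfl | ⟨s0, hs0⟩
  · simp [Metric.infDist]
  obtain ⟨t0, ht0⟩ := hT
  have hle : EMetric.infEdist p.1 S ≤ EMetric.infEdist p (S ×ˢ T) := by
    refine EMetric.le_infEdist.2 ?_
    rintro ⟨s, u⟩ ⟨hs, hu⟩
    calc EMetric.infEdist p.1 S ≤ edist p.1 s := EMetric.infEdist_le_edist_of_mem hs
      _ ≤ edist p (s, u) := by rw [Prod.edist_eq]; exact le_max_left _ _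
  have hne : EMetric.infEdist p (S ×ˢ T) ≠ ⊤ :=
    ne_top_of_le_ne_top (edist_ne_top _ _)
      (EMetric.infEdist_le_edist_of_mem (⟨hs0, ht0⟩ : (s0, t0) ∈ S ×ˢ T))
  exact ENNReal.toReal_mono hne hle

lemma infDist_snd_le {X Y : Type*} [MetricSpace X] [MetricSpace Y]
    (p : X × Y) (S : Set X) (T : Set Y) (hS : S.Nonempty) :
    Metric.infDist p.2 T ≤ Metric.infDist p (S ×ˢ T) := by
  rcases T.eq_empty_or_nonempty with rfl | ⟨t0, ht0⟩
  · simp [Metric.infDist]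
  obtain ⟨s0, hs0⟩ := hS
  have hle : EMetric.infEdist p.2 T ≤ EMetric.infEdist p (S ×ˢ T) := by
    refine EMetric.le_infEdist.2 ?_
    rintro ⟨u, t⟩ ⟨hu, ht⟩
    calc EMetric.infEdist p.2 T ≤ edist p.2 t := EMetric.infEdist_le_edist_of_mem ht
      _ ≤ edist p (u, t) := by rw [Prod.edist_eq]; exact le_max_right _ _
  have hne : EMetric.infEdist p (S ×ˢ T) ≠ ⊤ :=
    ne_top_of_le_ne_top (edist_ne_top _ _)
      (EMetric.infEdist_le_edist_of_mem (⟨hs0, ht0⟩ : (s0, t0) ∈ S ×ˢ T))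
  exact ENNReal.toReal_mono hne hle

/-- If `F` and `G` have PeSP, then so does the product map
`(F × G)(x,y) = F(x) × G(y)` on `X × Y` with the sup metric
(this is exactly the Mathlib `Prod` metric: `dist p q = max (dist p.1 q.1) (dist p.2 q.2)`). -/
theorem stmt12 {X Y : Type*} [MetricSpace X] [MetricSpace Y]
    (F : X → Set X) (G : Y → Set Y)
    (hFne : ∀ x, (F x).Nonempty) (hGne : ∀ y, (G y).Nonempty)
    (hF : SVPeriodicShadowing F) (hG : SVPeriodicShadowing G) :
    SVPeriodicShadowing (fun p : X × Y => F p.1 ×ˢ G p.2) := by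
  intro ε hε
  obtain ⟨δ₁, hδ₁, hF'⟩ := hF ε hε
  obtain ⟨δ₂, hδ₂, hG'⟩ := hG ε hε
  refine ⟨min δ₁ δ₂, lt_min hδ₁ hδ₂, ?_⟩
  intro x hx ⟨k, hk1, hkper⟩
  -- first coordinate pseudo-orbit
  have hx1 : IsPseudoOrbit F δ₁ (fun n => (x n).1) := by
    intro n
    have := infDist_fst_le (x (n+1)) (F (x n).1) (G (x n).2) (hGne _)
    exact lt_of_le_of_lt this ((hx n).trans_le (min_le_left _ _))
  have hx2 : IsPseudoOrbit G δ₂ (fun n => (x n).2) := by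
    intro n
    have := infDist_snd_le (x (n+1)) (F (x n).1) (G (x n).2) (hFne _)
    exact lt_of_le_of_lt this ((hx n).trans_le (min_le_right _ _))
  obtain ⟨z, hzorb, ⟨a, ha1, haper⟩, hzd⟩ :=
    hF' _ hx1 ⟨k, hk1, fun n => by simp [hkper n]⟩
  obtain ⟨w, hworb, ⟨b, hb1, hbper⟩, hwd⟩ :=
    hG' _ hx2 ⟨k, hk1, fun n => by simp [hkper n]⟩
  refine ⟨fun n => (z n, w n), fun n => ⟨hzorb n, hworb n⟩, ⟨a * b, ?_, ?_⟩, ?_⟩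
  · exact Nat.one_le_iff_ne_zero.2 (Nat.mul_ne_zero (by omega) (by omega))
  · intro n
    have hz : z (n + a * b) = z n := by
      have := period_mul z a haper b n
      rwa [Nat.mul_comm] at this
    have hw : w (n + a * b) = w n := period_mul w b hbper a n
    simp [Prod.ext_iff, hz, hw]
  · intro n
    rw [Prod.dist_eq]
    exact max_lt (hzd n) (hwd n)
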